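/- For every linear map j : ℝ² → Skew(4) there exist T ∈ O(2), S ∈ O(4), and real numbers a, b, p, q, r with 0 ≤ a ≤ b and p, q, r ≥ 0 such that the map j'(z) := Sᵀ · j(Tz) · S satisfies j'₋(e₁) = (a, 0, 0), j'₋(e₂) = (0, b, 0), j'₊(e₁) = (p, 0, 0), and j'₊(e₂) = (r, q, 0). -/

import Mathlib

open Matrix

/-- The component `v₊(M) ∈ ℝ³` of a 4×4 matrix under the splitting `so(4) ≅ ℝ³₊ ⊕ ℝ³₋`. -/
noncomputable def vplus (M : Matrix (Fin 4) (Fin 4) ℝ) : Fin 3 → ℝ :=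
  ![(M 0 1 + M 2 3) / 2, (M 0 2 - M 1 3) / 2, (M 0 3 + M 1 2) / 2]

/-- The component `v₋(M) ∈ ℝ³`. -/
noncomputable def vminus (M : Matrix (Fin 4) (Fin 4) ℝ) : Fin 3 → ℝ :=
  ![(M 0 1 - M 2 3) / 2, (M 0 2 + M 1 3) / 2, (M 0 3 - M 1 2) / 2]

def rot0 (C S : ℝ) : Matrix (Fin 3) (Fin 3) ℝ := !![1,0,0; 0,C,-S; 0,S,C]
def rot2 (C S : ℝ) : Matrix (Fin 3) (Fin 3) ℝ := !![C,-S,0; S,C,0; 0,0,1]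
def Gx (c1 s1 c2 s2 : ℝ) : Matrix (Fin 4) (Fin 4) ℝ :=
  !![c1,-s1,0,0; s1,c1,0,0; 0,0,c2,-s2; 0,0,s2,c2]
def Gz (c1 s1 c2 s2 : ℝ) : Matrix (Fin 4) (Fin 4) ℝ :=
  !![c1,0,0,-s1; 0,c2,-s2,0; 0,s2,c2,0; s1,0,0,c1]

lemma rot0_mem {C S : ℝ} (h : C^2 + S^2 = 1) : rot0 C S ∈ Matrix.orthogonalGroup (Fin 3) ℝ := by
  rw [Matrix.mem_orthogonalGroup_iff]
  ext i j
  fin_cases i <;> fin_cases j <;>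
    simp [rot0, Matrix.mul_apply, Fin.sum_univ_three, Matrix.one_apply, Matrix.star_apply, star_trivial, Matrix.transpose_apply] <;>
    ring_nf <;> linarith [h]

lemma rot2_mem {C S : ℝ} (h : C^2 + S^2 = 1) : rot2 C S ∈ Matrix.orthogonalGroup (Fin 3) ℝ := by
  rw [Matrix.mem_orthogonalGroup_iff]
  ext i j
  fin_cases i <;> fin_cases j <;>
    simp [rot2, Matrix.mul_apply, Fin.sum_univ_three, Matrix.one_apply, Matrix.star_apply, star_trivial, Matrix.transpose_apply] <;>
    ring_nf <;> linarith [h]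

lemma Gx_mem {c1 s1 c2 s2 : ℝ} (h1 : c1^2 + s1^2 = 1) (h2 : c2^2 + s2^2 = 1) :
    Gx c1 s1 c2 s2 ∈ Matrix.orthogonalGroup (Fin 4) ℝ := by
  rw [Matrix.mem_orthogonalGroup_iff]
  ext i j
  fin_cases i <;> fin_cases j <;>
    simp [Gx, Matrix.mul_apply, Fin.sum_univ_four, Matrix.one_apply, Matrix.star_apply, star_trivial, Matrix.transpose_apply] <;>
    ring_nf <;> linarith [h1, h2]

lemma Gz_mem {c1 s1 c2 s2 : ℝ} (h1 : c1^2 + s1^2 = 1) (h2 : c2^2 + s2^2 = 1) :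
    Gz c1 s1 c2 s2 ∈ Matrix.orthogonalGroup (Fin 4) ℝ := by
  rw [Matrix.mem_orthogonalGroup_iff]
  ext i j
  fin_cases i <;> fin_cases j <;>
    simp [Gz, Matrix.mul_apply, Fin.sum_univ_four, Matrix.one_apply, Matrix.star_apply, star_trivial, Matrix.transpose_apply] <;>
    ring_nf <;> linarith [h1, h2]

lemma skew_entries {M : Matrix (Fin 4) (Fin 4) ℝ} (hM : Mᵀ = -M) (i j : Fin 4) :
    M j i = -M i j := by
  have := congrFun (congrFun hM i) j
  simpa using this

lemma Gx_transpose (c1 s1 c2 s2 : ℝ) : (Gx c1 s1 c2 s2)ᵀ = Gx c1 (-s1) c2 (-s2) := by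
  ext i j; fin_cases i <;> fin_cases j <;> simp [Gx, Matrix.vecHead, Matrix.vecTail]

lemma Gz_transpose (c1 s1 c2 s2 : ℝ) : (Gz c1 s1 c2 s2)ᵀ = Gz c1 (-s1) c2 (-s2) := by
  ext i j; fin_cases i <;> fin_cases j <;> simp [Gz, Matrix.vecHead, Matrix.vecTail]

lemma acts_Gx_plus {c1 s1 c2 s2 : ℝ} (h1 : c1^2+s1^2=1) (h2 : c2^2+s2^2=1)
    (M : Matrix (Fin 4) (Fin 4) ℝ) (hM : Mᵀ = -M) :
    vplus ((Gx c1 s1 c2 s2)ᵀ * M * Gx c1 s1 c2 s2)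
      = (rot0 (c1*c2-s1*s2) (-(s1*c2+c1*s2))).mulVec (vplus M) := by
  have h := skew_entries hM
  have d0 : M 0 0 = 0 := by have := h 0 0; linarith
  have d1 : M 1 1 = 0 := by have := h 1 1; linarith
  have d2 : M 2 2 = 0 := by have := h 2 2; linarith
  have d3 : M 3 3 = 0 := by have := h 3 3; linarith
  rw [Gx_transpose]
  funext i
  fin_cases i <;>
    simp [vplus, Gx, rot0, Matrix.mul_apply, Matrix.mulVec, dotProduct,
      Fin.sum_univ_four, Fin.sum_univ_three, Matrix.transpose_apply, Matrix.vecMul, Matrix.vecHead, Matrix.vecTail,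
      h 0 1, h 0 2, h 0 3, h 1 2, h 1 3, h 2 3, d0, d1, d2, d3]
  · linear_combination M 0 1 * h1 + M 2 3 * h2
  · ring
  · ring

lemma acts_Gx_minus {c1 s1 c2 s2 : ℝ} (h1 : c1^2+s1^2=1) (h2 : c2^2+s2^2=1)
    (M : Matrix (Fin 4) (Fin 4) ℝ) (hM : Mᵀ = -M) :
    vminus ((Gx c1 s1 c2 s2)ᵀ * M * Gx c1 s1 c2 s2)
      = (rot0 (c1*c2+s1*s2) (s1*c2-c1*s2)).mulVec (vminus M) := by
  have h := skew_entries hM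
  have d0 : M 0 0 = 0 := by have := h 0 0; linarith
  have d1 : M 1 1 = 0 := by have := h 1 1; linarith
  have d2 : M 2 2 = 0 := by have := h 2 2; linarith
  have d3 : M 3 3 = 0 := by have := h 3 3; linarith
  rw [Gx_transpose]
  funext i
  fin_cases i <;>
    simp [vminus, Gx, rot0, Matrix.mul_apply, Matrix.mulVec, dotProduct,
      Fin.sum_univ_four, Fin.sum_univ_three, Matrix.transpose_apply, Matrix.vecMul, Matrix.vecHead, Matrix.vecTail,
      h 0 1, h 0 2, h 0 3, h 1 2, h 1 3, h 2 3, d0, d1, d2, d3]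
  · linear_combination M 0 1 * h1 - M 2 3 * h2
  · ring
  · ring

lemma acts_Gz_plus {c1 s1 c2 s2 : ℝ} (h1 : c1^2+s1^2=1) (h2 : c2^2+s2^2=1)
    (M : Matrix (Fin 4) (Fin 4) ℝ) (hM : Mᵀ = -M) :
    vplus ((Gz c1 s1 c2 s2)ᵀ * M * Gz c1 s1 c2 s2)
      = (rot2 (c1*c2-s1*s2) (-(s1*c2+c1*s2))).mulVec (vplus M) := by
  have h := skew_entries hM
  have d0 : M 0 0 = 0 := by have := h 0 0; linarith
  have d1 : M 1 1 = 0 := by have := h 1 1; linarith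
  have d2 : M 2 2 = 0 := by have := h 2 2; linarith
  have d3 : M 3 3 = 0 := by have := h 3 3; linarith
  rw [Gz_transpose]
  funext i
  fin_cases i <;>
    simp [vplus, Gz, rot2, Matrix.mul_apply, Matrix.mulVec, dotProduct,
      Fin.sum_univ_four, Fin.sum_univ_three, Matrix.transpose_apply, Matrix.vecMul, Matrix.vecHead, Matrix.vecTail,
      h 0 1, h 0 2, h 0 3, h 1 2, h 1 3, h 2 3, d0, d1, d2, d3]
  · ring
  · ring
  · linear_combination M 0 3 * h1 + M 1 2 * h2

lemma acts_Gz_minus {c1 s1 c2 s2 : ℝ} (h1 : c1^2+s1^2=1) (h2 : c2^2+s2^2=1)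
    (M : Matrix (Fin 4) (Fin 4) ℝ) (hM : Mᵀ = -M) :
    vminus ((Gz c1 s1 c2 s2)ᵀ * M * Gz c1 s1 c2 s2)
      = (rot2 (c1*c2+s1*s2) (s1*c2-c1*s2)).mulVec (vminus M) := by
  have h := skew_entries hM
  have d0 : M 0 0 = 0 := by have := h 0 0; linarith
  have d1 : M 1 1 = 0 := by have := h 1 1; linarith
  have d2 : M 2 2 = 0 := by have := h 2 2; linarith
  have d3 : M 3 3 = 0 := by have := h 3 3; linarith
  rw [Gz_transpose]
  funext i
  fin_cases i <;>
    simp [vminus, Gz, rot2, Matrix.mul_apply, Matrix.mulVec, dotProduct,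
      Fin.sum_univ_four, Fin.sum_univ_three, Matrix.transpose_apply, Matrix.vecMul, Matrix.vecHead, Matrix.vecTail,
      h 0 1, h 0 2, h 0 3, h 1 2, h 1 3, h 2 3, d0, d1, d2, d3]
  · ring
  · ring
  · linear_combination M 0 3 * h1 - M 1 2 * h2

lemma half_angle (C S : ℝ) (h : C^2 + S^2 = 1) :
    ∃ c s : ℝ, c^2 + s^2 = 1 ∧ c^2 - s^2 = C ∧ 2*c*s = S := by
  by_cases hC : C = -1
  · refine ⟨0, 1, by norm_num, by rw [hC]; ring, ?_⟩
    have hS : S^2 = 0 := by rw [hC] at h; nlinarith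
    have : S = 0 := by nlinarith
    simp [this]
  · have hCge : -1 ≤ C := by nlinarith
    have hCgt : -1 < C := lt_of_le_of_ne hCge (Ne.symm hC)
    have hpos : (0:ℝ) < (1+C)/2 := by linarith
    set c := Real.sqrt ((1+C)/2) with hc
    have hc2 : c^2 = (1+C)/2 := Real.sq_sqrt hpos.le
    have hcpos : 0 < c := Real.sqrt_pos.mpr hpos
    refine ⟨c, S/(2*c), ?_, ?_, ?_⟩
    · field_simp
      nlinarith [hc2]
    · field_simp
      nlinarith [hc2]
    · field_simp

lemma planar (x y : ℝ) : ∃ c s : ℝ, c^2 + s^2 = 1 ∧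
    c*x + s*y = Real.sqrt (x^2 + y^2) ∧ c*y - s*x = 0 := by
  by_cases h0 : x^2 + y^2 = 0
  · have hx : x = 0 := by nlinarith
    have hy : y = 0 := by nlinarith
    exact ⟨1, 0, by norm_num, by simp [hx, hy, h0], by simp [hx, hy]⟩
  · have hpos : 0 < x^2 + y^2 := lt_of_le_of_ne (by positivity) (Ne.symm h0)
    set r := Real.sqrt (x^2 + y^2) with hrdef
    have hr2 : r^2 = x^2 + y^2 := Real.sq_sqrt hpos.le
    have hr : 0 < r := Real.sqrt_pos.mpr hpos
    refine ⟨x/r, y/r, ?_, ?_, ?_⟩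
    · field_simp
      linarith [hr2]
    · field_simp
      linarith [hr2]
    · field_simp
      ring

lemma dot_expand (u0 u1 : Fin 3 → ℝ) (c s c' s' : ℝ) :
    (c • u0 + s • u1) ⬝ᵥ (c' • u0 + s' • u1)
      = c*c'*(u0 ⬝ᵥ u0) + (c*s' + s*c')*(u0 ⬝ᵥ u1) + s*s'*(u1 ⬝ᵥ u1) := by
  simp [dotProduct, Fin.sum_univ_three, Pi.add_apply, Pi.smul_apply, smul_eq_mul]
  ring

lemma step1 (u0 u1 : Fin 3 → ℝ) : ∃ c s : ℝ, c^2 + s^2 = 1 ∧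
    (c • u0 + s • u1) ⬝ᵥ ((-s) • u0 + c • u1) = 0 ∧
    (c • u0 + s • u1) ⬝ᵥ (c • u0 + s • u1) ≤ ((-s) • u0 + c • u1) ⬝ᵥ ((-s) • u0 + c • u1) := by
  set g0 := u0 ⬝ᵥ u0 with hg0
  set g1 := u0 ⬝ᵥ u1 with hg1
  set g2 := u1 ⬝ᵥ u1 with hg2
  obtain ⟨c, s, hunit, hmain⟩ :
      ∃ c s : ℝ, c^2 + s^2 = 1 ∧ c*s*(g2 - g0) + (c^2 - s^2)*g1 = 0 := by
    by_cases hρ : ((g2-g0)/2)^2 + g1^2 = 0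
    · have h1 : g1 = 0 := by nlinarith
      have h2 : g2 - g0 = 0 := by nlinarith
      exact ⟨1, 0, by norm_num, by rw [h1, h2]; ring⟩
    · have hpos : 0 < ((g2-g0)/2)^2 + g1^2 := lt_of_le_of_ne (by positivity) (Ne.symm hρ)
      set ρ := Real.sqrt (((g2-g0)/2)^2 + g1^2) with hρdef
      have hρ2 : ρ^2 = ((g2-g0)/2)^2 + g1^2 := Real.sq_sqrt hpos.le
      have hρpos : 0 < ρ := Real.sqrt_pos.mpr hpos
      have hCS : ((g0-g2)/(2*ρ))^2 + (g1/ρ)^2 = 1 := by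
        field_simp
        nlinarith [hρ2]
      obtain ⟨c, s, hcs, hC, hS⟩ := half_angle _ _ hCS
      refine ⟨c, s, hcs, ?_⟩
      have e1 : c*s = g1/(2*ρ) := by
        field_simp at hS ⊢
        linarith [hS]
      linear_combination ((g2-g0)/2) * (by linarith [e1] : 2*(c*s) = g1/ρ) + g1 * hC
  have hd : (c • u0 + s • u1) ⬝ᵥ ((-s) • u0 + c • u1) = 0 := by
    rw [dot_expand]
    rw [← hg0, ← hg1, ← hg2]
    linear_combination hmain
  rcases le_or_gt ((c • u0 + s • u1) ⬝ᵥ (c • u0 + s • u1))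
      (((-s) • u0 + c • u1) ⬝ᵥ ((-s) • u0 + c • u1)) with h | h
  · exact ⟨c, s, hunit, hd, h⟩
  · refine ⟨-s, c, by linarith [hunit], ?_, ?_⟩
    · rw [dot_expand] at hd ⊢
      rw [← hg0, ← hg1, ← hg2] at hd ⊢
      linear_combination -hd
    · have e1 : ((-c) • u0 + (-s) • u1) ⬝ᵥ ((-c) • u0 + (-s) • u1)
          = (c • u0 + s • u1) ⬝ᵥ (c • u0 + s • u1) := by
        rw [dot_expand, dot_expand]; ring
      rw [e1]
      exact h.le
section D
open Matrix

def Acts (G : Matrix (Fin 4) (Fin 4) ℝ) (P Q : Matrix (Fin 3) (Fin 3) ℝ) : Prop :=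
  G ∈ Matrix.orthogonalGroup (Fin 4) ℝ ∧
  ∀ M : Matrix (Fin 4) (Fin 4) ℝ, Mᵀ = -M →
    vplus (Gᵀ * M * G) = P.mulVec (vplus M) ∧ vminus (Gᵀ * M * G) = Q.mulVec (vminus M)

lemma conj_skew {G M : Matrix (Fin 4) (Fin 4) ℝ} (hM : Mᵀ = -M) :
    (Gᵀ * M * G)ᵀ = -(Gᵀ * M * G) := by
  rw [Matrix.transpose_mul, Matrix.transpose_mul, Matrix.transpose_transpose, hM]
  simp [Matrix.mul_assoc, Matrix.neg_mul, Matrix.mul_neg]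

lemma acts_mul {G1 G2 : Matrix (Fin 4) (Fin 4) ℝ} {P1 Q1 P2 Q2 : Matrix (Fin 3) (Fin 3) ℝ}
    (h1 : Acts G1 P1 Q1) (h2 : Acts G2 P2 Q2) : Acts (G1 * G2) (P2 * P1) (Q2 * Q1) := by
  refine ⟨mul_mem h1.1 h2.1, fun M hM => ?_⟩
  have hconj : (G1 * G2)ᵀ * M * (G1 * G2) = G2ᵀ * (G1ᵀ * M * G1) * G2 := by
    rw [Matrix.transpose_mul]
    noncomm_ring
  have hsk : (G1ᵀ * M * G1)ᵀ = -(G1ᵀ * M * G1) := conj_skew hM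
  obtain ⟨hp1, hm1⟩ := h1.2 M hM
  obtain ⟨hp2, hm2⟩ := h2.2 _ hsk
  constructor
  · rw [hconj, hp2, hp1, ← Matrix.mulVec_mulVec]
  · rw [hconj, hm2, hm1, ← Matrix.mulVec_mulVec]

lemma rot0_one : rot0 1 0 = 1 := by
  ext i j; fin_cases i <;> fin_cases j <;> simp [rot0, Matrix.one_apply, Matrix.vecHead, Matrix.vecTail]

lemma rot2_one : rot2 1 0 = 1 := by
  ext i j; fin_cases i <;> fin_cases j <;> simp [rot2, Matrix.one_apply, Matrix.vecHead, Matrix.vecTail]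

def GoodM (Q : Matrix (Fin 3) (Fin 3) ℝ) : Prop :=
  (∃ G, Acts G 1 Q) ∧ Q ∈ Matrix.orthogonalGroup (Fin 3) ℝ

def GoodP (P : Matrix (Fin 3) (Fin 3) ℝ) : Prop :=
  (∃ G, Acts G P 1) ∧ P ∈ Matrix.orthogonalGroup (Fin 3) ℝ

lemma goodM_mul {Q1 Q2 : Matrix (Fin 3) (Fin 3) ℝ} (h1 : GoodM Q1) (h2 : GoodM Q2) :
    GoodM (Q2 * Q1) := by
  obtain ⟨⟨G1, hG1⟩, hQ1⟩ := h1
  obtain ⟨⟨G2, hG2⟩, hQ2⟩ := h2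
  exact ⟨⟨G1 * G2, by simpa using acts_mul hG1 hG2⟩, mul_mem hQ2 hQ1⟩

lemma goodP_mul {P1 P2 : Matrix (Fin 3) (Fin 3) ℝ} (h1 : GoodP P1) (h2 : GoodP P2) :
    GoodP (P2 * P1) := by
  obtain ⟨⟨G1, hG1⟩, hP1⟩ := h1
  obtain ⟨⟨G2, hG2⟩, hP2⟩ := h2
  exact ⟨⟨G1 * G2, by simpa using acts_mul hG1 hG2⟩, mul_mem hP2 hP1⟩

lemma goodM_rot0 {C S : ℝ} (h : C^2 + S^2 = 1) : GoodM (rot0 C S) := by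
  refine ⟨?_, rot0_mem h⟩
  obtain ⟨c, s, hcs, hC, hS⟩ := half_angle C S h
  have h1 : c^2 + s^2 = 1 := hcs
  have h2 : c^2 + (-s)^2 = 1 := by rw [neg_sq]; exact hcs
  refine ⟨Gx c s c (-s), Gx_mem h1 h2, fun M hM => ?_⟩
  constructor
  · rw [acts_Gx_plus h1 h2 M hM]
    have e1 : c*c - s*(-s) = 1 := by nlinarith
    have e2 : -(s*c + c*(-s)) = 0 := by ring
    rw [e1, e2, rot0_one]
  · rw [acts_Gx_minus h1 h2 M hM]
    have e1 : c*c + s*(-s) = C := by nlinarith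
    have e2 : s*c - c*(-s) = S := by nlinarith
    rw [e1, e2]

lemma goodP_rot0 {C S : ℝ} (h : C^2 + S^2 = 1) : GoodP (rot0 C S) := by
  refine ⟨?_, rot0_mem h⟩
  obtain ⟨c, s, hcs, hC, hS⟩ := half_angle C S h
  have h1 : c^2 + (-s)^2 = 1 := by rw [neg_sq]; exact hcs
  refine ⟨Gx c (-s) c (-s), Gx_mem h1 h1, fun M hM => ?_⟩
  constructor
  · rw [acts_Gx_plus h1 h1 M hM]
    have e1 : c*c - (-s)*(-s) = C := by nlinarith
    have e2 : -((-s)*c + c*(-s)) = S := by nlinarith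
    rw [e1, e2]
  · rw [acts_Gx_minus h1 h1 M hM]
    have e1 : c*c + (-s)*(-s) = 1 := by nlinarith
    have e2 : (-s)*c - c*(-s) = 0 := by ring
    rw [e1, e2, rot0_one]

lemma goodM_rot2 {C S : ℝ} (h : C^2 + S^2 = 1) : GoodM (rot2 C S) := by
  refine ⟨?_, rot2_mem h⟩
  obtain ⟨c, s, hcs, hC, hS⟩ := half_angle C S h
  have h1 : c^2 + s^2 = 1 := hcs
  have h2 : c^2 + (-s)^2 = 1 := by rw [neg_sq]; exact hcs
  refine ⟨Gz c s c (-s), Gz_mem h1 h2, fun M hM => ?_⟩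
  constructor
  · rw [acts_Gz_plus h1 h2 M hM]
    have e1 : c*c - s*(-s) = 1 := by nlinarith
    have e2 : -(s*c + c*(-s)) = 0 := by ring
    rw [e1, e2, rot2_one]
  · rw [acts_Gz_minus h1 h2 M hM]
    have e1 : c*c + s*(-s) = C := by nlinarith
    have e2 : s*c - c*(-s) = S := by nlinarith
    rw [e1, e2]

lemma goodP_rot2 {C S : ℝ} (h : C^2 + S^2 = 1) : GoodP (rot2 C S) := by
  refine ⟨?_, rot2_mem h⟩
  obtain ⟨c, s, hcs, hC, hS⟩ := half_angle C S h
  have h1 : c^2 + (-s)^2 = 1 := by rw [neg_sq]; exact hcs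
  refine ⟨Gz c (-s) c (-s), Gz_mem h1 h1, fun M hM => ?_⟩
  constructor
  · rw [acts_Gz_plus h1 h1 M hM]
    have e1 : c*c - (-s)*(-s) = C := by nlinarith
    have e2 : -((-s)*c + c*(-s)) = S := by nlinarith
    rw [e1, e2]
  · rw [acts_Gz_minus h1 h1 M hM]
    have e1 : c*c + (-s)*(-s) = 1 := by nlinarith
    have e2 : (-s)*c - c*(-s) = 0 := by ring
    rw [e1, e2, rot2_one]

end D
section E
open Matrix

lemma mulVec_rot0 (C S : ℝ) (v : Fin 3 → ℝ) :
    (rot0 C S).mulVec v = ![v 0, C * v 1 - S * v 2, S * v 1 + C * v 2] := by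
  funext i
  fin_cases i <;>
    simp [rot0, Matrix.mulVec, dotProduct, Fin.sum_univ_three,
      Matrix.vecHead, Matrix.vecTail] <;> ring

lemma mulVec_rot2 (C S : ℝ) (v : Fin 3 → ℝ) :
    (rot2 C S).mulVec v = ![C * v 0 - S * v 1, S * v 0 + C * v 1, v 2] := by
  funext i
  fin_cases i <;>
    simp [rot2, Matrix.mulVec, dotProduct, Fin.sum_univ_three,
      Matrix.vecHead, Matrix.vecTail] <;> ring

lemma dot_preserve {Q : Matrix (Fin 3) (Fin 3) ℝ} (hQ : Q ∈ Matrix.orthogonalGroup (Fin 3) ℝ)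
    (x y : Fin 3 → ℝ) : (Q.mulVec x) ⬝ᵥ (Q.mulVec y) = x ⬝ᵥ y := by
  have h' : Qᵀ * Q = 1 := by
    have h2 := hQ
    rw [Matrix.mem_orthogonalGroup_iff'] at h2
    simpa [Matrix.star_eq_conjTranspose, Matrix.conjTranspose] using h2
  rw [dotProduct_mulVec]
  have : Q.mulVec x ᵥ* Q = x := by
    rw [← Matrix.mulVec_transpose, Matrix.mulVec_mulVec, h', Matrix.one_mulVec]
  rw [this]

lemma dot_self_expand (v : Fin 3 → ℝ) : v ⬝ᵥ v = v 0^2 + v 1^2 + v 2^2 := by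
  simp [dotProduct, Fin.sum_univ_three]
  ring

lemma Laxis (v : Fin 3 → ℝ) : ∃ C1 S1 C2 S2 : ℝ, C1^2 + S1^2 = 1 ∧ C2^2 + S2^2 = 1 ∧
    (rot2 C2 S2 * rot0 C1 S1).mulVec v = ![Real.sqrt (v 0^2 + v 1^2 + v 2^2), 0, 0] := by
  obtain ⟨c, s, hcs, he1, he2⟩ := planar (v 1) (-(v 2))
  set t := Real.sqrt ((v 1)^2 + (-(v 2))^2) with htdef
  have ht0 : 0 ≤ t := Real.sqrt_nonneg _
  have ht2 : t^2 = (v 1)^2 + (v 2)^2 := by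
    rw [htdef, Real.sq_sqrt (by positivity)]; ring
  have hw : (rot0 c s).mulVec v = ![v 0, t, 0] := by
    rw [mulVec_rot0]
    funext i
    fin_cases i <;> simp
    · linarith [he1]
    · linarith [he2]
  obtain ⟨c', s', hcs', hf1, hf2⟩ := planar (v 0) (-t)
  refine ⟨c, s, c', s', hcs, hcs', ?_⟩
  rw [← Matrix.mulVec_mulVec, hw, mulVec_rot2]
  have hsq : Real.sqrt ((v 0)^2 + (-t)^2) = Real.sqrt (v 0^2 + v 1^2 + v 2^2) := by
    congr 1
    rw [neg_sq, ht2]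
    ring
  funext i
  fin_cases i <;> simp
  · rw [← hsq]
    linarith [hf1]
  · linarith [hf2]

end E
section F
open Matrix

lemma vec3_zero : (![0, 0, 0] : Fin 3 → ℝ) = 0 := by
  funext i; fin_cases i <;> simp

lemma Lminus (m1 m2 : Fin 3 → ℝ) (hd : m1 ⬝ᵥ m2 = 0) :
    ∃ Q, GoodM Q ∧ Q.mulVec m1 = ![Real.sqrt (m1 0^2 + m1 1^2 + m1 2^2), 0, 0] ∧
      Q.mulVec m2 = ![0, Real.sqrt (m2 0^2 + m2 1^2 + m2 2^2), 0] := by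
  obtain ⟨C1, S1, C2, S2, h1, h2, hL1⟩ := Laxis m1
  set Q1 := rot2 C2 S2 * rot0 C1 S1 with hQ1def
  have hQ1good : GoodM Q1 := goodM_mul (goodM_rot0 h1) (goodM_rot2 h2)
  have hQ1mem := hQ1good.2
  set a := Real.sqrt (m1 0^2 + m1 1^2 + m1 2^2) with hadef
  have ha : Real.sqrt (m1 ⬝ᵥ m1) = a := by rw [dot_self_expand]
  set m2' := Q1.mulVec m2 with hm2'def
  have hdp : (Q1.mulVec m1) ⬝ᵥ m2' = 0 := by
    rw [hm2'def, dot_preserve hQ1mem]; exact hd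
  rw [hL1] at hdp
  have hdp2 : a * m2' 0 = 0 := by
    simpa [dotProduct, Fin.sum_univ_three] using hdp
  have hn2 : m2' ⬝ᵥ m2' = m2 ⬝ᵥ m2 := dot_preserve hQ1mem m2 m2
  have hb : Real.sqrt (m2' 0^2 + m2' 1^2 + m2' 2^2) = Real.sqrt (m2 0^2 + m2 1^2 + m2 2^2) := by
    rw [← dot_self_expand, hn2, dot_self_expand]
  by_cases ha0 : a = 0
  · obtain ⟨C1', S1', C2', S2', h1', h2', hL2⟩ := Laxis m2'
    set Q2 := rot2 C2' S2' * rot0 C1' S1' with hQ2def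
    have hQ2good : GoodM Q2 := goodM_mul (goodM_rot0 h1') (goodM_rot2 h2')
    refine ⟨rot2 0 1 * (Q2 * Q1), goodM_mul (goodM_mul hQ1good hQ2good)
      (goodM_rot2 (by norm_num)), ?_, ?_⟩
    · rw [← Matrix.mulVec_mulVec, ← Matrix.mulVec_mulVec, hL1]
      have : (![a, 0, 0] : Fin 3 → ℝ) = 0 := by rw [ha0]; exact vec3_zero
      rw [this, Matrix.mulVec_zero, Matrix.mulVec_zero]
    · rw [← Matrix.mulVec_mulVec, ← Matrix.mulVec_mulVec, ← hm2'def, hL2, hb, mulVec_rot2]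
      funext i; fin_cases i <;> simp
  · have h20 : m2' 0 = 0 := by
      rcases mul_eq_zero.mp hdp2 with h | h
      · exact absurd h ha0
      · exact h
    obtain ⟨c, s, hcs, he1, he2⟩ := planar (m2' 1) (-(m2' 2))
    have hbt : Real.sqrt (m2' 1^2 + (-(m2' 2))^2) = Real.sqrt (m2 0^2 + m2 1^2 + m2 2^2) := by
      rw [← hb, h20]
      congr 1
      ring
    refine ⟨rot0 c s * Q1, goodM_mul hQ1good (goodM_rot0 hcs), ?_, ?_⟩
    · rw [← Matrix.mulVec_mulVec, hL1, mulVec_rot0]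
      funext i; fin_cases i <;> simp
    · rw [← Matrix.mulVec_mulVec, ← hm2'def, mulVec_rot0]
      funext i; fin_cases i <;> simp [h20]
      · rw [← hbt]
        linarith [he1]
      · linarith [he2]

lemma Lplus (x y : Fin 3 → ℝ) :
    ∃ P, GoodP P ∧ ∃ q r : ℝ, 0 ≤ q ∧
      P.mulVec x = ![Real.sqrt (x 0^2 + x 1^2 + x 2^2), 0, 0] ∧ P.mulVec y = ![r, q, 0] := by
  obtain ⟨C1, S1, C2, S2, h1, h2, hL1⟩ := Laxis x
  set P1 := rot2 C2 S2 * rot0 C1 S1 with hP1def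
  have hP1good : GoodP P1 := goodP_mul (goodP_rot0 h1) (goodP_rot2 h2)
  set y' := P1.mulVec y with hy'def
  obtain ⟨c, s, hcs, he1, he2⟩ := planar (y' 1) (-(y' 2))
  set q := Real.sqrt (y' 1^2 + (-(y' 2))^2) with hqdef
  refine ⟨rot0 c s * P1, goodP_mul hP1good (goodP_rot0 hcs), q, y' 0,
    Real.sqrt_nonneg _, ?_, ?_⟩
  · rw [← Matrix.mulVec_mulVec, hL1, mulVec_rot0]
    funext i; fin_cases i <;> simp
  · rw [← Matrix.mulVec_mulVec, ← hy'def, mulVec_rot0]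
    funext i; fin_cases i <;> simp
    · linarith [he1]
    · linarith [he2]

end F
section G
open Matrix

lemma vminus_lin (c s : ℝ) (A B : Matrix (Fin 4) (Fin 4) ℝ) :
    vminus (c • A + s • B) = c • vminus A + s • vminus B := by
  funext i
  fin_cases i <;>
    simp [vminus, Matrix.add_apply, Matrix.smul_apply, smul_eq_mul] <;> ring

lemma vplus_lin (c s : ℝ) (A B : Matrix (Fin 4) (Fin 4) ℝ) :
    vplus (c • A + s • B) = c • vplus A + s • vplus B := by
  funext i
  fin_cases i <;>
    simp [vplus, Matrix.add_apply, Matrix.smul_apply, smul_eq_mul] <;> ring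

lemma vminus_neg (A : Matrix (Fin 4) (Fin 4) ℝ) : vminus (-A) = -vminus A := by
  funext i
  fin_cases i <;> simp [vminus] <;> ring

lemma vplus_neg (A : Matrix (Fin 4) (Fin 4) ℝ) : vplus (-A) = -vplus A := by
  funext i
  fin_cases i <;> simp [vplus] <;> ring

lemma Tmat_mem {c s : ℝ} (h : c^2 + s^2 = 1) :
    (!![c, -s; s, c] : Matrix (Fin 2) (Fin 2) ℝ) ∈ Matrix.orthogonalGroup (Fin 2) ℝ := by
  rw [Matrix.mem_orthogonalGroup_iff]
  ext i j
  fin_cases i <;> fin_cases j <;>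
    simp [Matrix.mul_apply, Fin.sum_univ_two, Matrix.one_apply, Matrix.star_apply,
      star_trivial, Matrix.transpose_apply, Matrix.vecHead, Matrix.vecTail] <;>
    ring_nf <;> linarith [h]

lemma Fmat_mem : (!![(-1:ℝ), 0; 0, 1] : Matrix (Fin 2) (Fin 2) ℝ)
    ∈ Matrix.orthogonalGroup (Fin 2) ℝ := by
  rw [Matrix.mem_orthogonalGroup_iff]
  ext i j
  fin_cases i <;> fin_cases j <;>
    simp [Matrix.mul_apply, Fin.sum_univ_two, Matrix.one_apply, Matrix.star_apply,
      star_trivial, Matrix.transpose_apply, Matrix.vecHead, Matrix.vecTail]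

lemma Tcol0 (c s : ℝ) : (!![c, -s; s, c] : Matrix (Fin 2) (Fin 2) ℝ).mulVec (Pi.single 0 1)
    = c • (Pi.single 0 1 : Fin 2 → ℝ) + s • (Pi.single 1 1 : Fin 2 → ℝ) := by
  funext i
  fin_cases i <;>
    simp [Matrix.mulVec, dotProduct, Fin.sum_univ_two, Pi.single_apply,
      Matrix.vecHead, Matrix.vecTail]

lemma Tcol1 (c s : ℝ) : (!![c, -s; s, c] : Matrix (Fin 2) (Fin 2) ℝ).mulVec (Pi.single 1 1)
    = (-s) • (Pi.single 0 1 : Fin 2 → ℝ) + c • (Pi.single 1 1 : Fin 2 → ℝ) := by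
  funext i
  fin_cases i <;>
    simp [Matrix.mulVec, dotProduct, Fin.sum_univ_two, Pi.single_apply,
      Matrix.vecHead, Matrix.vecTail]

lemma Fcol0 : (!![(-1:ℝ), 0; 0, 1] : Matrix (Fin 2) (Fin 2) ℝ).mulVec (Pi.single 0 1)
    = -(Pi.single 0 1 : Fin 2 → ℝ) := by
  funext i
  fin_cases i <;>
    simp [Matrix.mulVec, dotProduct, Fin.sum_univ_two, Pi.single_apply,
      Matrix.vecHead, Matrix.vecTail]

lemma Fcol1 : (!![(-1:ℝ), 0; 0, 1] : Matrix (Fin 2) (Fin 2) ℝ).mulVec (Pi.single 1 1)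
    = (Pi.single 1 1 : Fin 2 → ℝ) := by
  funext i
  fin_cases i <;>
    simp [Matrix.mulVec, dotProduct, Fin.sum_univ_two, Pi.single_apply,
      Matrix.vecHead, Matrix.vecTail]

lemma mulVec_D (v : Fin 3 → ℝ) :
    (rot2 (-1) 0 * rot0 (-1) 0).mulVec v = ![-(v 0), v 1, -(v 2)] := by
  rw [← Matrix.mulVec_mulVec, mulVec_rot0, mulVec_rot2]
  funext i
  fin_cases i <;> simp <;> ring

end G
section Main
open Matrix

/-- normal form of a linear map `j : ℝ² → Skew(4)` under the `O(2) × O(4)`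
action: one can arrange `j₋(e₁) = (a,0,0)`, `j₋(e₂) = (0,b,0)`, `j₊(e₁) = (p,0,0)` and
`j₊(e₂) = (r,q,0)` with `0 ≤ a ≤ b` and `p, q, r ≥ 0`. -/
theorem normal_form_of_j (j : (Fin 2 → ℝ) →ₗ[ℝ] Matrix (Fin 4) (Fin 4) ℝ)
    (hjskew : ∀ z, (j z)ᵀ = -(j z)) :
    ∃ T ∈ Matrix.orthogonalGroup (Fin 2) ℝ, ∃ S ∈ Matrix.orthogonalGroup (Fin 4) ℝ,
      ∃ a b p q r : ℝ, 0 ≤ a ∧ a ≤ b ∧ 0 ≤ p ∧ 0 ≤ q ∧ 0 ≤ r ∧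
        vminus (Sᵀ * j (T.mulVec (Pi.single 0 1)) * S) = ![a, 0, 0] ∧
        vminus (Sᵀ * j (T.mulVec (Pi.single 1 1)) * S) = ![0, b, 0] ∧
        vplus (Sᵀ * j (T.mulVec (Pi.single 0 1)) * S) = ![p, 0, 0] ∧
        vplus (Sᵀ * j (T.mulVec (Pi.single 1 1)) * S) = ![r, q, 0] := by
  classical
  set u0 := vminus (j (Pi.single 0 1)) with hu0
  set u1 := vminus (j (Pi.single 1 1)) with hu1
  set p0 := vplus (j (Pi.single 0 1)) with hp0
  set p1 := vplus (j (Pi.single 1 1)) with hp1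
  obtain ⟨c, s, hcs, hdot, hle⟩ := step1 u0 u1
  set m1 : Fin 3 → ℝ := c • u0 + s • u1 with hm1
  set m2 : Fin 3 → ℝ := (-s) • u0 + c • u1 with hm2
  set x : Fin 3 → ℝ := c • p0 + s • p1 with hxd
  set y : Fin 3 → ℝ := (-s) • p0 + c • p1 with hyd
  obtain ⟨Q, hQgood, hQm1, hQm2⟩ := Lminus m1 m2 hdot
  obtain ⟨P, hPgood, q, r, hq, hPx, hPy⟩ := Lplus x y
  set a := Real.sqrt (m1 0^2 + m1 1^2 + m1 2^2) with hadef
  set b := Real.sqrt (m2 0^2 + m2 1^2 + m2 2^2) with hbdef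
  set p := Real.sqrt (x 0^2 + x 1^2 + x 2^2) with hpdef
  have ha0 : 0 ≤ a := Real.sqrt_nonneg _
  have hp0' : 0 ≤ p := Real.sqrt_nonneg _
  have hab : a ≤ b := by
    apply Real.sqrt_le_sqrt
    have := hle
    rw [dot_self_expand, dot_self_expand] at this
    linarith
  set T : Matrix (Fin 2) (Fin 2) ℝ := !![c, -s; s, c] with hT
  have hTmem := Tmat_mem hcs
  have hjz0 : j (T.mulVec (Pi.single 0 1)) = c • j (Pi.single 0 1) + s • j (Pi.single 1 1) := by
    rw [hT, Tcol0, map_add, _root_.map_smul, _root_.map_smul]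
  have hjz1 : j (T.mulVec (Pi.single 1 1))
      = (-s) • j (Pi.single 0 1) + c • j (Pi.single 1 1) := by
    rw [hT, Tcol1, map_add, _root_.map_smul, _root_.map_smul]
  have hvm0 : vminus (j (T.mulVec (Pi.single 0 1))) = m1 := by
    rw [hjz0, vminus_lin, hm1, hu0, hu1]
  have hvm1 : vminus (j (T.mulVec (Pi.single 1 1))) = m2 := by
    rw [hjz1, vminus_lin, hm2, hu0, hu1]
  have hvp0 : vplus (j (T.mulVec (Pi.single 0 1))) = x := by
    rw [hjz0, vplus_lin, hxd, hp0, hp1]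
  have hvp1 : vplus (j (T.mulVec (Pi.single 1 1))) = y := by
    rw [hjz1, vplus_lin, hyd, hp0, hp1]
  obtain ⟨GQ, hGQ⟩ := hQgood.1
  obtain ⟨GP, hGP⟩ := hPgood.1
  rcases le_or_gt 0 r with hr | hr
  · have hS := acts_mul hGQ hGP
    refine ⟨T, hTmem, GQ * GP, hS.1, a, b, p, q, r, ha0, hab, hp0', hq, hr, ?_, ?_, ?_, ?_⟩
    · obtain ⟨_, hm⟩ := hS.2 _ (hjskew (T.mulVec (Pi.single 0 1)))
      rw [hm, hvm0, Matrix.one_mul, hQm1]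
    · obtain ⟨_, hm⟩ := hS.2 _ (hjskew (T.mulVec (Pi.single 1 1)))
      rw [hm, hvm1, Matrix.one_mul, hQm2]
    · obtain ⟨hp, _⟩ := hS.2 _ (hjskew (T.mulVec (Pi.single 0 1)))
      rw [hp, hvp0, Matrix.mul_one, hPx]
    · obtain ⟨hp, _⟩ := hS.2 _ (hjskew (T.mulVec (Pi.single 1 1)))
      rw [hp, hvp1, Matrix.mul_one, hPy]
  · -- need to flip the sign of the first basis vector
    set D : Matrix (Fin 3) (Fin 3) ℝ := rot2 (-1) 0 * rot0 (-1) 0 with hD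
    have hDgoodM : GoodM D := goodM_mul (goodM_rot0 (by norm_num)) (goodM_rot2 (by norm_num))
    have hDgoodP : GoodP D := goodP_mul (goodP_rot0 (by norm_num)) (goodP_rot2 (by norm_num))
    obtain ⟨GDm, hGDm⟩ := hDgoodM.1
    obtain ⟨GDp, hGDp⟩ := hDgoodP.1
    have hS := acts_mul (acts_mul (acts_mul hGQ hGP) hGDm) hGDp
    have hAP : D * (1 * (P * 1)) = D * P := by rw [Matrix.one_mul, Matrix.mul_one]
    have hAQ : (1 : Matrix (Fin 3) (Fin 3) ℝ) * (D * (1 * Q)) = D * Q := by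
      rw [Matrix.one_mul, Matrix.one_mul]
    rw [hAP, hAQ] at hS
    set F : Matrix (Fin 2) (Fin 2) ℝ := !![(-1:ℝ), 0; 0, 1] with hF
    have hcol0 : (T * F).mulVec (Pi.single 0 1) = -(T.mulVec (Pi.single 0 1)) := by
      rw [← Matrix.mulVec_mulVec, hF, Fcol0, Matrix.mulVec_neg]
    have hcol1 : (T * F).mulVec (Pi.single 1 1) = T.mulVec (Pi.single 1 1) := by
      rw [← Matrix.mulVec_mulVec, hF, Fcol1]
    have hjz0' : j ((T * F).mulVec (Pi.single 0 1)) = -(j (T.mulVec (Pi.single 0 1))) := by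
      rw [hcol0, map_neg]
    refine ⟨T * F, mul_mem hTmem Fmat_mem, GQ * GP * GDm * GDp, hS.1, a, b, p, q, -r,
      ha0, hab, hp0', hq, by linarith, ?_, ?_, ?_, ?_⟩
    · obtain ⟨_, hm⟩ := hS.2 _ (hjskew ((T * F).mulVec (Pi.single 0 1)))
      rw [hm, hjz0', vminus_neg, hvm0, Matrix.mulVec_neg, ← Matrix.mulVec_mulVec,
        hQm1, hD, mulVec_D]
      funext i; fin_cases i <;> simp
    · obtain ⟨_, hm⟩ := hS.2 _ (hjskew ((T * F).mulVec (Pi.single 1 1)))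
      rw [hm, hcol1, hvm1, ← Matrix.mulVec_mulVec, hQm2, hD, mulVec_D]
      funext i; fin_cases i <;> simp
    · obtain ⟨hp, _⟩ := hS.2 _ (hjskew ((T * F).mulVec (Pi.single 0 1)))
      rw [hp, hjz0', vplus_neg, hvp0, Matrix.mulVec_neg, ← Matrix.mulVec_mulVec,
        hPx, hD, mulVec_D]
      funext i; fin_cases i <;> simp
    · obtain ⟨hp, _⟩ := hS.2 _ (hjskew ((T * F).mulVec (Pi.single 1 1)))
      rw [hp, hcol1, hvp1, ← Matrix.mulVec_mulVec, hPy, hD, mulVec_D]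
      funext i; fin_cases i <;> simp

end Main
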